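/- Let h : ℝ → [0,∞) be integrable and t > 0. Then lim_{λ ↓ 0} sup_{0 ≤ t' ≤ t} ∫_0^{t'} (∫_{λ^{-2}(t'-s)}^{∞} h(u) du) ds = 0. -/

import Mathlib

open MeasureTheory Filter

/-- For integrable nonnegative `h` and `t > 0`,
`lim_{λ ↓ 0} sup_{0 ≤ t' ≤ t} ∫_0^{t'} (∫_{λ^{-2}(t'-s)}^{∞} h(u) du) ds = 0`. -/
theorem sup_tail_integral_tendsto_zero
    (h : ℝ → ℝ) (hh_int : Integrable h) (hh_nonneg : ∀ u, 0 ≤ h u)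
    (t : ℝ) (ht : 0 < t) :
    Tendsto
      (fun lam : ℝ =>
        ⨆ t' : Set.Icc (0 : ℝ) t,
          ∫ s in (0 : ℝ)..(t' : ℝ),
            ∫ u in Set.Ici ((lam ^ 2)⁻¹ * ((t' : ℝ) - s)), h u)
      (nhdsWithin 0 (Set.Ioi 0)) (nhds 0) := by
  haveI : Nonempty (Set.Icc (0 : ℝ) t) :=
    (Set.nonempty_Icc.mpr ht.le).to_subtype
  set T : ℝ → ℝ := fun x => ∫ u in Set.Ici x, h u with hT
  have hT_nonneg : ∀ x, 0 ≤ T x := fun x =>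
    setIntegral_nonneg measurableSet_Ici fun u _ => hh_nonneg u
  have hT_anti : Antitone T := by
    intro x y hxy
    exact setIntegral_mono_set hh_int.integrableOn
      (Eventually.of_forall fun u => hh_nonneg u)
      (Set.Ici_subset_Ici.mpr hxy).eventuallyLE
  have hT_tendsto : Tendsto T atTop (nhds 0) := by
    have hempty : (⋂ x : ℝ, Set.Ici x) = (∅ : Set ℝ) := by
      rw [Set.eq_empty_iff_forall_notMem]
      intro x hx
      have := Set.mem_iInter.mp hx (x + 1)
      simp only [Set.mem_Ici] at this
      linarith
    have := tendsto_setIntegral_of_antitone (f := h) (μ := volume)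
      (s := fun x : ℝ => Set.Ici x) (fun _ => measurableSet_Ici)
      (fun x y hxy => Set.Ici_subset_Ici.mpr hxy) ⟨0, hh_int.integrableOn⟩
    rwa [hempty, Measure.restrict_empty, integral_zero_measure] at this
  -- antitone comp: for c ≥ 0, x ↦ T (c * x) is antitone
  have hcomp_anti : ∀ c : ℝ, 0 ≤ c → Antitone (fun x => T (c * x)) := by
    intro c hc x y hxy
    exact hT_anti (mul_le_mul_of_nonneg_left hxy hc)
  set g : ℝ → ℝ := fun lam => ∫ x in (0 : ℝ)..t, T ((lam ^ 2)⁻¹ * x) with hg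
  have hc_nonneg : ∀ lam : ℝ, 0 ≤ (lam ^ 2)⁻¹ := fun lam => by positivity
  -- each term of sup is ≤ g lam
  have hterm_le : ∀ lam : ℝ, ∀ t' : Set.Icc (0 : ℝ) t,
      (∫ s in (0 : ℝ)..(t' : ℝ), T ((lam ^ 2)⁻¹ * ((t' : ℝ) - s))) ≤ g lam := by
    intro lam
    rintro ⟨t', ht'⟩
    simp only
    have key : (∫ s in (0 : ℝ)..t', T ((lam ^ 2)⁻¹ * (t' - s)))
        = ∫ x in (0 : ℝ)..t', T ((lam ^ 2)⁻¹ * x) := by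
      have := intervalIntegral.integral_comp_sub_left
        (a := (0 : ℝ)) (b := t') (fun x => T ((lam ^ 2)⁻¹ * x)) t'
      simpa using this
    rw [key]
    apply intervalIntegral.integral_mono_interval le_rfl ht'.1 ht'.2
    · exact Eventually.of_forall fun x => hT_nonneg _
    · exact (hcomp_anti _ (hc_nonneg lam)).intervalIntegrable
  have hsup_le : ∀ lam : ℝ,
      (⨆ t' : Set.Icc (0 : ℝ) t,
        ∫ s in (0 : ℝ)..(t' : ℝ), T ((lam ^ 2)⁻¹ * ((t' : ℝ) - s))) ≤ g lam :=
    fun lam => ciSup_le (hterm_le lam)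
  have hbdd : ∀ lam : ℝ, BddAbove (Set.range fun t' : Set.Icc (0 : ℝ) t =>
      ∫ s in (0 : ℝ)..(t' : ℝ), T ((lam ^ 2)⁻¹ * ((t' : ℝ) - s))) :=
    fun lam => ⟨g lam, by rintro _ ⟨t', rfl⟩; exact hterm_le lam t'⟩
  -- g tends to 0
  have hg_tendsto : Tendsto g (nhdsWithin 0 (Set.Ioi 0)) (nhds 0) := by
    have hg_eq : ∀ lam : ℝ, g lam = ∫ x in Set.Ioc (0 : ℝ) t, T ((lam ^ 2)⁻¹ * x) := by
      intro lam
      show (∫ x in (0 : ℝ)..t, T ((lam ^ 2)⁻¹ * x)) = _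
      exact intervalIntegral.integral_of_le ht.le
    rw [show g = fun lam => ∫ x in Set.Ioc (0 : ℝ) t, T ((lam ^ 2)⁻¹ * x) from funext hg_eq]
    have main := tendsto_integral_filter_of_dominated_convergence
      (μ := volume.restrict (Set.Ioc (0 : ℝ) t)) (l := nhdsWithin (0:ℝ) (Set.Ioi 0))
      (F := fun lam x => T ((lam ^ 2)⁻¹ * x)) (f := fun _ => (0:ℝ)) (fun _ => T 0)
      ?_ ?_ ?_ ?_
    · simpa using main
    · exact Eventually.of_forall fun lam =>
        ((hcomp_anti _ (hc_nonneg lam)).measurable).aestronglyMeasurable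
    · refine Eventually.of_forall fun lam => ?_
      rw [ae_restrict_iff' measurableSet_Ioc]
      refine Eventually.of_forall fun x hx => ?_
      rw [Real.norm_eq_abs, abs_of_nonneg (hT_nonneg _)]
      exact hT_anti (mul_nonneg (hc_nonneg lam) hx.1.le)
    · exact (integrableOn_const_iff (C := T 0)).mpr (Or.inr (by simp [ht]))
    · rw [ae_restrict_iff' measurableSet_Ioc]
      refine Eventually.of_forall fun x hx => ?_
      have hx0 : 0 < x := hx.1
      have hsq : Tendsto (fun lam : ℝ => lam ^ 2) (nhdsWithin 0 (Set.Ioi 0))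
          (nhdsWithin 0 (Set.Ioi 0)) := by
        apply tendsto_nhdsWithin_of_tendsto_nhds_of_eventually_within
        · have : Tendsto (fun lam : ℝ => lam ^ 2) (nhds 0) (nhds 0) := by
            simpa using (continuous_pow 2).tendsto (0 : ℝ)
          exact this.mono_left nhdsWithin_le_nhds
        · exact eventually_mem_nhdsWithin.mono fun lam hlam => by
            simp only [Set.mem_Ioi] at hlam ⊢; positivity
      have hinv : Tendsto (fun lam : ℝ => (lam ^ 2)⁻¹) (nhdsWithin 0 (Set.Ioi 0)) atTop :=
        tendsto_inv_nhdsGT_zero.comp hsq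
      have hmul : Tendsto (fun lam : ℝ => (lam ^ 2)⁻¹ * x) (nhdsWithin 0 (Set.Ioi 0)) atTop :=
        hinv.atTop_mul_const hx0
      exact hT_tendsto.comp hmul
  -- squeeze
  show Tendsto (fun lam : ℝ => ⨆ t' : Set.Icc (0 : ℝ) t,
      ∫ s in (0 : ℝ)..(t' : ℝ), T ((lam ^ 2)⁻¹ * ((t' : ℝ) - s)))
    (nhdsWithin 0 (Set.Ioi 0)) (nhds 0)
  apply squeeze_zero' ?_ (Eventually.of_forall hsup_le) hg_tendsto
  refine Eventually.of_forall fun lam => ?_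
  refine le_trans ?_ (le_ciSup (hbdd lam) ⟨0, Set.left_mem_Icc.mpr ht.le⟩)
  simp
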